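/- For every natural number n ≥ 2, the space ℓ_1^n (ℝ^n with the norm ‖x‖ = |x_1| + ⋯ + |x_n|) does not have Property P_2; that is, there exist unit vectors u, v in ℓ_1^n such that u^⊥ ∪ v^⊥ = ℓ_1^n. -/

import Mathlib

/-- Birkhoff–James orthogonality: `x ⊥_B y` iff `‖x + λ y‖ ≥ ‖x‖` for all real `λ`. -/
def BJOrth {E : Type*} [NormedAddCommGroup E] [NormedSpace ℝ E] (x y : E) : Prop :=
  ∀ lam : ℝ, ‖x‖ ≤ ‖x + lam • y‖

/-- Property `P_n`: for every `n` unit vectors, the union of their Birkhoff–James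
orthogonality sets is a proper subset of the whole space. -/
def PropertyP (X : Type*) [NormedAddCommGroup X] [NormedSpace ℝ X] (n : ℕ) : Prop :=
  ∀ x : Fin n → X, (∀ i, ‖x i‖ = 1) → (⋃ i, {y : X | BJOrth (x i) y}) ≠ Set.univ

lemma l1norm {n : ℕ} (x : PiLp 1 (fun _ : Fin n => ℝ)) : ‖x‖ = ∑ i, |x i| := by
  rw [PiLp.norm_eq_sum (p := 1) (by norm_num)]
  simp [Real.norm_eq_abs]

def sv {n : ℕ} (i0 : Fin n) : PiLp 1 (fun _ : Fin n => ℝ) :=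
  WithLp.toLp 1 (fun j => if j = i0 then (1:ℝ) else 0)

lemma orth_of {n : ℕ} (i0 : Fin n) (y : PiLp 1 (fun _ : Fin n => ℝ))
    (h : |y i0| ≤ ∑ i ∈ Finset.univ.erase i0, |y i|) :
    BJOrth (sv i0) y := by
  intro lam
  set e : PiLp 1 (fun _ : Fin n => ℝ) := sv i0 with he_def
  have he : ‖e‖ = 1 := by
    rw [l1norm]
    simp [e, sv, apply_ite abs, Finset.sum_ite_eq']
  rw [he, l1norm]
  have happ : ∀ i, (e + lam • y) i = e i + lam * y i := fun i => rfl
  have hsplit : ∑ i, |(e + lam • y) i|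
      = |1 + lam * y i0| + ∑ i ∈ Finset.univ.erase i0, |lam| * |y i| := by
    rw [← Finset.add_sum_erase _ _ (Finset.mem_univ i0)]
    congr 1
    · rw [happ]; simp [e, sv]
    · apply Finset.sum_congr rfl
      intro i hi
      rw [happ]
      simp [e, sv, Finset.ne_of_mem_erase hi, abs_mul]
  rw [hsplit, ← Finset.mul_sum]
  have h2 : |lam| * |y i0| ≤ |lam| * ∑ i ∈ Finset.univ.erase i0, |y i| :=
    mul_le_mul_of_nonneg_left h (abs_nonneg _)
  have h3 : (1:ℝ) ≤ |1 + lam * y i0| + |lam| * |y i0| := by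
    calc (1:ℝ) = |(1 + lam * y i0) - lam * y i0| := by ring_nf; simp
    _ ≤ |1 + lam * y i0| + |lam * y i0| := abs_sub _ _
    _ = |1 + lam * y i0| + |lam| * |y i0| := by rw [abs_mul]
  linarith

theorem stmt13 (n : ℕ) (hn : 2 ≤ n) :
    ¬ PropertyP (PiLp 1 (fun _ : Fin n => ℝ)) 2 ∧
    ∃ u v : PiLp 1 (fun _ : Fin n => ℝ), ‖u‖ = 1 ∧ ‖v‖ = 1 ∧
      ({y : PiLp 1 (fun _ : Fin n => ℝ) | BJOrth u y} ∪
        {y : PiLp 1 (fun _ : Fin n => ℝ) | BJOrth v y}) = Set.univ := by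
  have h0 : (0:ℕ) < n := by omega
  have h1 : (1:ℕ) < n := by omega
  set i0 : Fin n := ⟨0, h0⟩
  set i1 : Fin n := ⟨1, h1⟩
  have hne : i0 ≠ i1 := by simp [i0, i1, Fin.ext_iff]
  set u : PiLp 1 (fun _ : Fin n => ℝ) := sv i0
  set v : PiLp 1 (fun _ : Fin n => ℝ) := sv i1
  have hu : ‖u‖ = 1 := by rw [l1norm]; simp [u, sv, apply_ite abs, Finset.sum_ite_eq']
  have hv : ‖v‖ = 1 := by rw [l1norm]; simp [v, sv, apply_ite abs, Finset.sum_ite_eq']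
  have hunion : ({y : PiLp 1 (fun _ : Fin n => ℝ) | BJOrth u y} ∪
        {y : PiLp 1 (fun _ : Fin n => ℝ) | BJOrth v y}) = Set.univ := by
    ext y
    simp only [Set.mem_union, Set.mem_setOf_eq, Set.mem_univ, iff_true]
    by_cases hc : |y i0| ≤ ∑ i ∈ Finset.univ.erase i0, |y i|
    · exact Or.inl (orth_of i0 y hc)
    · right
      apply orth_of i1 y
      push_neg at hc
      have ha : |y i1| ≤ ∑ i ∈ Finset.univ.erase i0, |y i| :=
        Finset.single_le_sum (fun i _ => abs_nonneg (y i))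
          (Finset.mem_erase.mpr ⟨fun h => hne h.symm, Finset.mem_univ _⟩)
      have hb : |y i0| ≤ ∑ i ∈ Finset.univ.erase i1, |y i| :=
        Finset.single_le_sum (fun i _ => abs_nonneg (y i))
          (Finset.mem_erase.mpr ⟨hne, Finset.mem_univ _⟩)
      linarith
  refine ⟨?_, u, v, hu, hv, hunion⟩
  intro hP
  apply hP ![u, v] (by intro i; fin_cases i <;> simpa)
  rw [← hunion]
  ext y
  simp [Fin.exists_fin_two]
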